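/- Let (G,C) be a weighted DAG and M a set of vertices, and suppose the edge i→k exists in the critical DAG D*(C,M). If some critical path π from i to k in (G,C) contains an internal node j (distinct from i and k), then both edges i→j and j→k exist in D*(C,M). -/

import Mathlib

/-!  Common definitions: weighted DAGs, paths, critical paths,
critical DAGs and C*-separation, following Boege–Ferry–Hollering–Nowell,
"Polyhedral aspects of maxoids". -/

variable {V : Type*}

/-- `p` is a directed path (vertex list) from `i` to `j` in the digraph `E`. -/
def IsPath (E : V → V → Prop) (i j : V) (p : List V) : Prop :=
  p.head? = some i ∧ p.getLast? = some j ∧ List.Chain' E p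

/-- The weight of a path: the sum of the edge weights along consecutive vertices. -/
def pathWeight (c : V → V → ℝ) (p : List V) : ℝ :=
  ((p.zip p.tail).map fun q => c q.1 q.2).sum

/-- `p` is a critical (maximum-weight) path from `i` to `j`. -/
def IsCritical (E : V → V → Prop) (c : V → V → ℝ) (i j : V) (p : List V) : Prop :=
  IsPath E i j p ∧ ∀ q, IsPath E i j q → pathWeight c q ≤ pathWeight c p

/-- The internal vertices of a path (all but the two endpoints). -/
def internalVerts (p : List V) : List V := p.tail.dropLast

/-- Edge `i → j` of the critical DAG `D*(C,L)`: there is a directed `i`–`j`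
path in `G` and no critical `i`–`j` path has an internal vertex in `L`. -/
def critEdge (E : V → V → Prop) (c : V → V → ℝ) (L : Set V) (i j : V) : Prop :=
  (∃ p, IsPath E i j p) ∧
    ∀ p, IsCritical E c i j p → ∀ v ∈ internalVerts p, v ∉ L

/-- `i` and `j` are C*-connected given `L`: some path of one of the five
permitted shapes joins them in the critical DAG `D*(C,L)` (colliders must lie
in `L`, non-colliders outside `L`, at most one collider). -/
def starConn (E : V → V → Prop) (c : V → V → ℝ) (L : Set V) (i j : V) : Prop :=
  let D := critEdge E c L
  D i j ∨ D j i ∨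
  (∃ p, p ∉ L ∧ D p i ∧ D p j) ∨
  (∃ l, l ∈ L ∧ D i l ∧ D j l) ∨
  (∃ p l, p ∉ L ∧ l ∈ L ∧ D p i ∧ D p l ∧ D j l) ∨
  (∃ p l, p ∉ L ∧ l ∈ L ∧ D p j ∧ D p l ∧ D i l) ∨
  (∃ p q l, p ∉ L ∧ q ∉ L ∧ l ∈ L ∧ D p i ∧ D p l ∧ D q l ∧ D q j)

/-- C*-separation of two vertices given `L`. -/
def CSep (E : V → V → Prop) (c : V → V → ℝ) (L : Set V) (i j : V) : Prop :=
  ¬ starConn E c L i j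

/-- C*-connection of two sets of vertices given `L`. -/
def starConnSets (E : V → V → Prop) (c : V → V → ℝ) (L I J : Set V) : Prop :=
  ∃ i ∈ I, ∃ j ∈ J, starConn E c L i j

/-- C*-separation of two sets of vertices given `L`. -/
def CSepSets (E : V → V → Prop) (c : V → V → ℝ) (L I J : Set V) : Prop :=
  ¬ starConnSets E c L I J

/-- The digraph `E` is acyclic. -/
def IsAcyclic (E : V → V → Prop) : Prop := ∀ v, ¬ Relation.TransGen E v v

/-- A weight matrix is generic: between any two vertices the maximum-weight
path is unique whenever one exists. -/
def Generic (E : V → V → Prop) (c : V → V → ℝ) : Prop :=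
  ∀ i j p q, IsCritical E c i j p → IsCritical E c i j q → p = q

/-- The set of generic weight matrices inducing exactly the same critical
paths as `c`. -/
def sameCritSet (E : V → V → Prop) (c : V → V → ℝ) : Set (V → V → ℝ) :=
  {c' | Generic E c' ∧ ∀ i j p, IsCritical E c' i j p ↔ IsCritical E c i j p}

/-- if `i → k` is in `D*(C,M)` and some critical `i`–`k` path
contains an internal node `j`, then `i → j` and `j → k` are in `D*(C,M)`. -/
lemma getLast?_append_cons' (a b : List V) (j : V) :
    (a ++ j :: b).getLast? = (j :: b).getLast? := by
  rw [List.getLast?_append]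
  cases h : (j :: b).getLast? with
  | none => simp at h
  | some x => simp [h]

lemma getLast?_cons_ne_nil {b : List V} (j : V) (hb : b ≠ []) :
    (j :: b).getLast? = b.getLast? := by
  obtain ⟨x, hx⟩ := List.getLast?_isSome.2 hb |> Option.isSome_iff_exists.1
  rw [List.getLast?_cons]
  simp [hx]

lemma pathWeight_single (c : V → V → ℝ) (x : V) : pathWeight c [x] = 0 := rfl

lemma pathWeight_cons_cons (c : V → V → ℝ) (x y : V) (t : List V) :
    pathWeight c (x::y::t) = c x y + pathWeight c (y::t) := by
  simp [pathWeight]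

lemma pathWeight_split (c : V → V → ℝ) (a b : List V) (m : V) :
    pathWeight c (a ++ m :: b) = pathWeight c (a ++ [m]) + pathWeight c (m :: b) := by
  induction a with
  | nil => simp [pathWeight_single]
  | cons x a ih =>
    cases a with
    | nil => simp [pathWeight_cons_cons, pathWeight_single]
    | cons y a' =>
      simp only [List.cons_append, pathWeight_cons_cons] at *
      rw [ih]; ring

lemma path_split {E : V → V → Prop} {i k j : V} {a b : List V}
    (h : IsPath E i k (a ++ j :: b)) (ha : a ≠ []) (hb : b ≠ []) :
    IsPath E i j (a ++ [j]) ∧ IsPath E j k (j :: b) := by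
  obtain ⟨h1, h2, h3⟩ := h
  rw [getLast?_append_cons'] at h2
  refine ⟨⟨?_, ?_, ?_⟩, ⟨rfl, h2, ?_⟩⟩
  · rwa [List.head?_append_of_ne_nil _ ha] at h1 ⊢
  · simp [List.getLast?_append]
  · exact h3.prefix ⟨b, by simp⟩
  · exact h3.suffix ⟨a, rfl⟩

lemma path_glue {E : V → V → Prop} {i k j : V} {a b : List V} (ha : a ≠ [])
    (h1 : IsPath E i j (a ++ [j])) (h2 : IsPath E j k (j :: b)) :
    IsPath E i k (a ++ j :: b) := by
  obtain ⟨h1a, h1b, h1c⟩ := h1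
  obtain ⟨_, h2b, h2c⟩ := h2
  refine ⟨?_, ?_, ?_⟩
  · rwa [List.head?_append_of_ne_nil _ ha] at h1a ⊢
  · rw [getLast?_append_cons']; exact h2b
  · change List.IsChain E (a ++ j :: b); rw [List.isChain_append]
    change List.IsChain E (a ++ [j]) at h1c; rw [List.isChain_append] at h1c
    refine ⟨h1c.1, h2c, ?_⟩
    intro x hx y hy
    simp at hy; subst hy
    exact h1c.2.2 x hx j (by simp)

lemma internal_sub_left {a b : List V} (j : V) (ha : a ≠ []) (hb : b ≠ [])
    {v : V} (hv : v ∈ internalVerts (a ++ [j])) : v ∈ internalVerts (a ++ j :: b) := by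
  obtain ⟨x, a', rfl⟩ := List.exists_cons_of_ne_nil ha
  simp only [internalVerts, List.cons_append, List.tail_cons] at hv ⊢
  rw [List.dropLast_append] at hv ⊢
  simp at hv ⊢
  exact Or.inl hv

lemma internal_sub_right {a b : List V} (j : V) (ha : a ≠ []) (hb : b ≠ [])
    {v : V} (hv : v ∈ internalVerts (j :: b)) : v ∈ internalVerts (a ++ j :: b) := by
  obtain ⟨x, a', rfl⟩ := List.exists_cons_of_ne_nil ha
  simp only [internalVerts, List.cons_append, List.tail_cons, List.tail_cons] at hv ⊢
  rw [List.dropLast_append]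
  simp [hb]
  rw [List.dropLast_cons_of_ne_nil hb]
  right; simp [hv]

theorem stmt3 (E : V → V → Prop) (c : V → V → ℝ) (M : Set V) (i k j : V)
    (hik : critEdge E c M i k) (p : List V)
    (hp : IsCritical E c i k p) (hj : j ∈ internalVerts p)
    (hji : j ≠ i) (hjk : j ≠ k) :
    critEdge E c M i j ∧ critEdge E c M j k := by
  obtain ⟨s, u, hsu⟩ := List.append_of_mem hj
  have hpne : p ≠ [] := by rintro rfl; simp [IsCritical, IsPath] at hp
  have htne : p.tail ≠ [] := by
    intro h; rw [internalVerts, h] at hj; simp at hj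
  have hp1 : p = i :: p.tail := by
    cases p with
    | nil => simp at hpne
    | cons x t =>
      have := hp.1.1
      simp at this
      rw [this]; rfl
  have hp2 : p.tail = (s ++ j :: u) ++ [p.tail.getLast htne] := by
    conv_lhs => rw [← List.dropLast_append_getLast htne]
    rw [internalVerts] at hsu
    rw [hsu]
  set kk := p.tail.getLast htne with hkk
  have hpeq : p = (i :: s) ++ j :: (u ++ [kk]) := by
    rw [hp1, hp2]; simp
  set a : List V := i :: s with hadef
  set b : List V := u ++ [kk] with hbdef
  have ha : a ≠ [] := by simp [hadef]
  have hbne : b ≠ [] := by simp [hbdef]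
  rw [hpeq] at hp
  obtain ⟨hij, hjk2⟩ := path_split hp.1 ha hbne
  have hpw : pathWeight c (a ++ j :: b) =
      pathWeight c (a ++ [j]) + pathWeight c (j :: b) := pathWeight_split c a b j
  constructor
  · refine ⟨⟨a ++ [j], hij⟩, ?_⟩
    intro q hq v hv hvM
    have hqne : q ≠ [] := by rintro rfl; simpa using hq.1.1
    have hqeq : q = q.dropLast ++ [j] := by
      conv_lhs => rw [← List.dropLast_append_getLast hqne]
      have := hq.1.2.1
      rw [List.getLast?_eq_getLast hqne] at this
      simp at this
      rw [this]
    set a' := q.dropLast with ha'def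
    have ha' : a' ≠ [] := by
      intro h
      rw [h] at hqeq
      have := hq.1.1
      rw [hqeq] at this
      simp at this
      exact hji this
    have hqpath : IsPath E i j (a' ++ [j]) := hqeq ▸ hq.1
    have hr : IsPath E i k (a' ++ j :: b) := path_glue ha' hqpath hjk2
    have hw1 : pathWeight c (a' ++ j :: b) = pathWeight c q + pathWeight c (j :: b) := by
      rw [pathWeight_split, ← hqeq]
    have hq3 : pathWeight c (a ++ [j]) ≤ pathWeight c q := hq.2 _ hij
    have hple : pathWeight c (a ++ j :: b) ≤ pathWeight c (a' ++ j :: b) := by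
      rw [hpw, hw1]; linarith
    have hcritr : IsCritical E c i k (a' ++ j :: b) :=
      ⟨hr, fun t ht => le_trans (hp.2 t ht) hple⟩
    refine hik.2 _ hcritr v ?_ hvM
    refine internal_sub_left j ha' hbne ?_
    rw [← hqeq]; exact hv
  · refine ⟨⟨j :: b, hjk2⟩, ?_⟩
    intro q hq v hv hvM
    have hqne : q ≠ [] := by rintro rfl; simpa using hq.1.1
    have hqeq : q = j :: q.tail := by
      cases q with
      | nil => simp at hqne
      | cons x t =>
        have := hq.1.1
        simp at this
        rw [this]; rfl
    have htne' : q.tail ≠ [] := by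
      intro h
      rw [h] at hqeq
      have := hq.1.2.1
      rw [hqeq] at this
      simp at this
      exact hjk this
    have hqpath : IsPath E j k (j :: q.tail) := hqeq ▸ hq.1
    have hr : IsPath E i k (a ++ j :: q.tail) := path_glue ha hij hqpath
    have hw1 : pathWeight c (a ++ j :: q.tail) =
        pathWeight c (a ++ [j]) + pathWeight c q := by
      rw [pathWeight_split, ← hqeq]
    have hq3 : pathWeight c (j :: b) ≤ pathWeight c q := hq.2 _ hjk2
    have hple : pathWeight c (a ++ j :: b) ≤ pathWeight c (a ++ j :: q.tail) := by
      rw [hpw, hw1]; linarith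
    have hcritr : IsCritical E c i k (a ++ j :: q.tail) :=
      ⟨hr, fun t ht => le_trans (hp.2 t ht) hple⟩
    refine hik.2 _ hcritr v ?_ hvM
    refine internal_sub_right j ha htne' ?_
    rw [← hqeq]; exact hv
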